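/- Let $f$ be a $C^2$ function on $\mathbb{R}$ with polynomially bounded derivatives and $\int f\varphi = 0$ for the OU invariant Gaussian measure $\varphi$. Then there exist $\tilde C, \tilde n > 0$ such that for all $t \ge 1$ and all $x$, $|e^{\mu t} T_t f(x) - x \int f' \varphi\, dy| \le \tilde C (1+|x|^{\tilde n}) e^{-\mu t}$. -/

import Mathlib

open MeasureTheory

/-- membership in `uIcc` gives an absolute-value bound. -/
lemma OU_mem_abs {u v z : ℝ} (hz : z ∈ Set.uIcc u v) : |z| ≤ max |u| |v| := by
  rw [Set.uIcc] at hz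
  have h1 : min u v ≤ z := by simpa using hz.1
  have h2 : z ≤ max u v := by simpa using hz.2
  have hu := le_abs_self u
  have hv := le_abs_self v
  have hu' := neg_abs_le u
  have hv' := neg_abs_le v
  refine abs_le.mpr ⟨?_, ?_⟩
  · have : -(max |u| |v|) ≤ min u v := le_min (by simp only [neg_le]; nlinarith [le_max_left |u| |v|]) (by nlinarith [le_max_right |u| |v|])
    linarith
  · have : max u v ≤ max |u| |v| := max_le (hu.trans (le_max_left _ _)) (hv.trans (le_max_right _ _))
    linarith

/-- Mean value inequality on a segment. -/
lemma OU_lip (g : ℝ → ℝ) (hg : ∀ z, DifferentiableAt ℝ g z) (u v M : ℝ)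
    (hM : ∀ z ∈ Set.uIcc u v, |deriv g z| ≤ M) : |g v - g u| ≤ M * |v - u| := by
  have := Convex.norm_image_sub_le_of_norm_deriv_le (𝕜 := ℝ) (f := g)
    (fun z _ => hg z) (fun z hz => by simpa [Real.norm_eq_abs] using hM z hz)
    (convex_uIcc u v) Set.left_mem_uIcc Set.right_mem_uIcc
  simpa [Real.norm_eq_abs] using this

/-- Second-order Taylor estimate with a sup bound on the second derivative. -/
lemma OU_taylor (f : ℝ → ℝ) (hdf : Differentiable ℝ f) (hdf' : Differentiable ℝ (deriv f))
    (u h M : ℝ) (hM : ∀ z, |z| ≤ |u| + |h| → |deriv (deriv f) z| ≤ M) :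
    |f (u + h) - f u - h * deriv f u| ≤ M * h ^ 2 := by
  have hM0 : 0 ≤ M :=
    le_trans (abs_nonneg _) (hM u (le_add_of_nonneg_right (abs_nonneg _)))
  set g : ℝ → ℝ := fun z => f z - z * deriv f u with hgdef
  have hgd : ∀ z, DifferentiableAt ℝ g z := fun z =>
    (hdf z).sub (differentiableAt_id.mul_const _)
  have hgderiv : ∀ z, deriv g z = deriv f z - deriv f u := by
    intro z
    have h1 : HasDerivAt g (deriv f z - deriv f u) z := by
      have := ((hdf z).hasDerivAt).sub ((hasDerivAt_id z).mul_const (deriv f u))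
      simpa [hgdef, Pi.sub_def] using this
    exact h1.deriv
  have key : ∀ z ∈ Set.uIcc u (u + h), |deriv g z| ≤ M * |h| := by
    intro z hz
    have hzb : |z| ≤ |u| + |h| := by
      have := OU_mem_abs hz
      have h1 : |u + h| ≤ |u| + |h| := abs_add_le _ _
      have h2 : |u| ≤ |u| + |h| := le_add_of_nonneg_right (abs_nonneg _)
      exact this.trans (max_le h2 h1)
    have hlip : |deriv f z - deriv f u| ≤ M * |z - u| := by
      apply OU_lip (deriv f) (fun w => hdf' w) u z M
      intro w hw
      apply hM
      have := OU_mem_abs hw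
      have : |w| ≤ max |u| |z| := this
      exact this.trans (max_le (le_add_of_nonneg_right (abs_nonneg _)) (by linarith [abs_nonneg (u:ℝ)] ))
    have hzu : |z - u| ≤ |h| := by
      rw [Set.uIcc] at hz
      have h1 : min u (u + h) ≤ z := by simpa using hz.1
      have h2 : z ≤ max u (u + h) := by simpa using hz.2
      have hna := neg_abs_le h
      have hla := le_abs_self h
      have hmin : u - |h| ≤ min u (u + h) := le_min (by linarith [abs_nonneg h]) (by linarith)
      have hmax : max u (u + h) ≤ u + |h| := max_le (by linarith [abs_nonneg h]) (by linarith)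
      refine abs_le.mpr ⟨by linarith, by linarith⟩
    rw [hgderiv z]
    calc |deriv f z - deriv f u| ≤ M * |z - u| := hlip
      _ ≤ M * |h| := by exact mul_le_mul_of_nonneg_left hzu hM0
  have hfin := OU_lip g hgd u (u + h) (M * |h|) key
  have heq : g (u + h) - g u = f (u + h) - f u - h * deriv f u := by
    rw [hgdef]; ring
  rw [heq] at hfin
  calc |f (u + h) - f u - h * deriv f u| ≤ M * |h| * |u + h - u| := hfin
    _ = M * h ^ 2 := by
        rw [show u + h - u = h by ring]
        rw [mul_assoc, ← abs_mul, show h * h = h ^ 2 by ring, abs_of_nonneg (sq_nonneg h)]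

/-- `(s+t)^n ≤ 2^n (s^n + t^n)` for nonnegative reals. -/
lemma OU_pow_add_le (s t : ℝ) (hs : 0 ≤ s) (ht : 0 ≤ t) (n : ℕ) :
    (s + t) ^ n ≤ 2 ^ n * (s ^ n + t ^ n) := by
  have h1 : s + t ≤ 2 * max s t := by
    rcases max_cases s t with ⟨h, h'⟩ | ⟨h, h'⟩ <;> rw [h] <;> linarith
  have h2 : (s + t) ^ n ≤ (2 * max s t) ^ n :=
    pow_le_pow_left₀ (by positivity) h1 n
  have h3 : (2 * max s t) ^ n = 2 ^ n * (max s t) ^ n := mul_pow 2 _ n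
  have h4 : (max s t) ^ n ≤ s ^ n + t ^ n := by
    rcases max_cases s t with ⟨h, _⟩ | ⟨h, _⟩ <;> rw [h]
    · exact le_add_of_nonneg_right (pow_nonneg ht n)
    · exact le_add_of_nonneg_left (pow_nonneg hs n)
  calc (s + t) ^ n ≤ 2 ^ n * (max s t) ^ n := by rw [← h3]; exact h2
    _ ≤ 2 ^ n * (s ^ n + t ^ n) := by
        exact mul_le_mul_of_nonneg_left h4 (by positivity)

/-- `|r|^k ≤ 1 + |r|^l` for `k ≤ l`. -/
lemma OU_abs_pow_le (r : ℝ) (k l : ℕ) (hkl : k ≤ l) : |r| ^ k ≤ 1 + |r| ^ l := by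
  rcases le_or_gt |r| 1 with h | h
  · have : |r| ^ k ≤ 1 := pow_le_one₀ (abs_nonneg r) h
    have := pow_nonneg (abs_nonneg r) l
    linarith
  · have : |r| ^ k ≤ |r| ^ l := pow_le_pow_right₀ h.le hkl
    linarith

/-- Gaussian moment integrability. -/
lemma OU_int_pow (b : ℝ) (hb : 0 < b) (k : ℕ) :
    Integrable (fun y : ℝ => |y| ^ k * Real.exp (-b * y ^ 2)) := by
  have h := (integrable_rpow_mul_exp_neg_mul_sq hb (s := (k : ℝ))
    (by have := Nat.cast_nonneg (α := ℝ) k; linarith)).abs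
  refine h.congr (Filter.Eventually.of_forall fun y => ?_)
  show |y ^ (k:ℝ) * Real.exp (-b * y ^ 2)| = |y| ^ k * Real.exp (-b * y ^ 2)
  rw [Real.rpow_natCast, abs_mul, abs_pow, abs_of_pos (Real.exp_pos _)]

set_option maxHeartbeats 2000000 in
/-- Quantitative first-order asymptotics of the one-dimensional OU semigroup on a centered
`C²` function with polynomially bounded derivatives:
`|e^{μ t} T_t f (x) - x ∫ f' dφ| ≤ C̃ (1+|x|^ñ) e^{-μ t}` for `t ≥ 1`. -/
theorem OU_semigroup_first_order_rate
    (μ σ : ℝ) (hμ : 0 < μ) (hσ : 0 < σ)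
    (φ : ℝ → ℝ)
    (hφ : ∀ y, φ y = Real.sqrt (μ / (Real.pi * σ ^ 2)) * Real.exp (-μ * y ^ 2 / σ ^ 2))
    (T : ℝ → (ℝ → ℝ) → ℝ → ℝ)
    (hT : ∀ t f x, T t f x =
      ∫ y, f (Real.exp (-μ * t) * x + Real.sqrt (1 - Real.exp (-2 * μ * t)) * y) * φ y)
    (f : ℝ → ℝ)
    (hf2 : ContDiff ℝ 2 f)
    (hgrow : ∃ (C₀ : ℝ) (n : ℕ), ∀ x, |f x| ≤ C₀ * (1 + |x| ^ n))
    (hd1 : ∃ (C₁ : ℝ) (n₁ : ℕ), ∀ x, |deriv f x| ≤ C₁ * (1 + |x| ^ n₁))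
    (hd2 : ∃ (C₂ : ℝ) (n₂ : ℕ), ∀ x, |deriv (deriv f) x| ≤ C₂ * (1 + |x| ^ n₂))
    (hcentered : (∫ y, f y * φ y) = 0) :
    ∃ (C : ℝ) (m : ℕ), 0 < C ∧ 0 < m ∧ ∀ t ≥ (1:ℝ), ∀ x : ℝ,
      |Real.exp (μ * t) * T t f x - x * ∫ y, deriv f y * φ y|
        ≤ C * (1 + |x| ^ m) * Real.exp (-μ * t) := by
  obtain ⟨C₀, n₀, hC₀⟩ := hgrow
  obtain ⟨C₁, n₁, hC₁⟩ := hd1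
  obtain ⟨C₂, n₂, hC₂⟩ := hd2
  -- nonnegativity of the growth constants
  have habs0 : ∀ k : ℕ, |(0:ℝ)| ^ k ≤ 1 :=
    fun k => pow_le_one₀ (abs_nonneg _) (by norm_num)
  have hC₀0 : 0 ≤ C₀ := by
    nlinarith [hC₀ 0, abs_nonneg (f 0), pow_nonneg (abs_nonneg (0:ℝ)) n₀, habs0 n₀]
  have hC₁0 : 0 ≤ C₁ := by
    nlinarith [hC₁ 0, abs_nonneg (deriv f 0), pow_nonneg (abs_nonneg (0:ℝ)) n₁, habs0 n₁]
  have hC₂0 : 0 ≤ C₂ := by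
    nlinarith [hC₂ 0, abs_nonneg (deriv (deriv f) 0), pow_nonneg (abs_nonneg (0:ℝ)) n₂, habs0 n₂]
  -- regularity of f
  have hfc : Continuous f := hf2.continuous
  have hdf : Differentiable ℝ f := hf2.differentiable (by norm_num)
  have hf1' : ContDiff ℝ 1 (deriv f) :=
    (contDiff_succ_iff_deriv.mp (show ContDiff ℝ (1+1) f by norm_num; exact hf2)).2.2
  have hf'c : Continuous (deriv f) := hf1'.continuous
  have hdf' : Differentiable ℝ (deriv f) := hf1'.differentiable one_ne_zero
  -- facts about φ
  have hb : 0 < μ / σ ^ 2 := by positivity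
  have hφ' : ∀ y, φ y = Real.sqrt (μ / (Real.pi * σ ^ 2)) * Real.exp (-(μ / σ ^ 2) * y ^ 2) := by
    intro y; rw [hφ y]; congr 2; ring
  have hφpos : ∀ y, 0 < φ y := by
    intro y; rw [hφ' y]
    have : 0 < Real.sqrt (μ / (Real.pi * σ ^ 2)) :=
      Real.sqrt_pos.mpr (by have := Real.pi_pos; positivity)
    positivity
  have hφcont : Continuous φ := by
    have : φ = fun y => Real.sqrt (μ / (Real.pi * σ ^ 2)) * Real.exp (-(μ / σ ^ 2) * y ^ 2) :=
      funext hφ'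
    rw [this]; fun_prop
  have hIk : ∀ k : ℕ, Integrable fun y => |y| ^ k * φ y := by
    intro k
    have h := (OU_int_pow _ hb k).const_mul (Real.sqrt (μ / (Real.pi * σ ^ 2)))
    refine h.congr (Filter.Eventually.of_forall fun y => ?_)
    show Real.sqrt (μ / (Real.pi * σ ^ 2)) * (|y| ^ k * Real.exp (-(μ / σ ^ 2) * y ^ 2))
        = |y| ^ k * φ y
    rw [hφ' y]; ring
  have hIφ : Integrable φ := by simpa using hIk 0
  -- integrability of polynomially bounded functions against φ
  have key_int : ∀ (g : ℝ → ℝ), Continuous g → ∀ (A : ℝ) (k : ℕ),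
      (∀ y, |g y| ≤ A * (1 + |y| ^ k)) → Integrable fun y => g y * φ y := by
    intro g hg A k hA
    have hdom : Integrable fun y => A * φ y + A * (|y| ^ k * φ y) :=
      (hIφ.const_mul A).add ((hIk k).const_mul A)
    refine hdom.mono' ((hg.mul hφcont).aestronglyMeasurable)
      (Filter.Eventually.of_forall fun y => ?_)
    have h1 : ‖g y * φ y‖ = |g y| * φ y := by
      rw [Real.norm_eq_abs, abs_mul, abs_of_pos (hφpos y)]
    rw [h1]
    calc |g y| * φ y ≤ (A * (1 + |y| ^ k)) * φ y :=
          mul_le_mul_of_nonneg_right (hA y) (hφpos y).le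
      _ = A * φ y + A * (|y| ^ k * φ y) := by ring
  -- moments
  have hMk0 : ∀ k : ℕ, 0 ≤ ∫ y, |y| ^ k * φ y :=
    fun k => integral_nonneg fun y => mul_nonneg (pow_nonneg (abs_nonneg y) k) (hφpos y).le
  have hM00 : 0 ≤ ∫ y, φ y := integral_nonneg fun y => (hφpos y).le
  set M0 : ℝ := ∫ y, φ y with hM0def
  set M1 : ℝ := ∫ y, |y| ^ 1 * φ y with hM1def
  set Mn1 : ℝ := ∫ y, |y| ^ (n₁ + 1) * φ y with hMn1def
  set Mn2 : ℝ := ∫ y, |y| ^ (n₂ + 1) * φ y with hMn2def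
  set MN : ℝ := ∫ y, |y| ^ n₂ * φ y with hMNdef
  clear_value M0 M1 Mn1 Mn2 MN
  have hM10 : 0 ≤ M1 := by rw [hM1def]; exact hMk0 1
  have hMn10 : 0 ≤ Mn1 := by rw [hMn1def]; exact hMk0 (n₁ + 1)
  have hMn20 : 0 ≤ Mn2 := by rw [hMn2def]; exact hMk0 (n₂ + 1)
  have hMN0 : 0 ≤ MN := by rw [hMNdef]; exact hMk0 n₂
  set K₁ : ℝ := C₁ * (M1 + Mn1) with hK₁def
  set K₂ : ℝ := C₂ * (M1 + Mn2) with hK₂def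
  set Q0 : ℝ := C₂ * (M0 + 2 ^ n₂ * M0 + 2 ^ n₂ * MN) with hQ0def
  clear_value K₁ K₂ Q0
  have hK₁0 : 0 ≤ K₁ := by rw [hK₁def]; exact mul_nonneg hC₁0 (by linarith)
  have hK₂0 : 0 ≤ K₂ := by rw [hK₂def]; exact mul_nonneg hC₂0 (by linarith)
  have hQ00 : 0 ≤ Q0 := by
    rw [hQ0def]
    have h2n : (0:ℝ) ≤ 2 ^ n₂ := by positivity
    exact mul_nonneg hC₂0 (by linarith [mul_nonneg h2n hM00, mul_nonneg h2n hMN0])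
  refine ⟨1 + K₁ + K₂ + Q0, n₂ + 2, by linarith, Nat.succ_pos _, ?_⟩
  intro t ht x
  set a := Real.exp (-μ * t) with ha
  set s := Real.sqrt (1 - Real.exp (-2 * μ * t)) with hs
  clear_value a s
  have ha0 : 0 < a := by rw [ha]; exact Real.exp_pos _
  have ha1 : a < 1 := by rw [ha]; exact Real.exp_lt_one_iff.mpr (by linarith [mul_le_mul_of_nonneg_right ht hμ.le])
  have hexp2 : Real.exp (-2 * μ * t) = a ^ 2 := by
    rw [ha, sq, ← Real.exp_add]; congr 1; ring
  have hs0 : 0 ≤ s := by rw [hs]; exact Real.sqrt_nonneg _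
  have hle1 : Real.exp (-2 * μ * t) ≤ 1 := by rw [hexp2]; linarith [mul_le_mul_of_nonneg_left ha1.le ha0.le, ha1.le]
  have hs1 : s ≤ 1 := by
    rw [hs]
    exact Real.sqrt_le_one.mpr (by linarith [Real.exp_pos (-2 * μ * t)])
  have hs2 : s ^ 2 = 1 - a ^ 2 := by
    rw [hs, Real.sq_sqrt (by linarith), hexp2]
  have h1s : 1 - s ≤ a ^ 2 := by
    nlinarith [mul_nonneg hs0 (sub_nonneg.mpr hs1), hs2]
  have habs_s : ∀ y : ℝ, |s * y| ≤ |y| := by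
    intro y; rw [abs_mul, abs_of_nonneg hs0]; linarith [mul_nonneg (sub_nonneg.mpr hs1) (abs_nonneg y)]
  have habs_a : ∀ y : ℝ, |a * y| ≤ |y| := by
    intro y; rw [abs_mul, abs_of_pos ha0]; linarith [mul_nonneg (sub_nonneg.mpr ha1.le) (abs_nonneg y)]
  -- integrability of all integrands
  have hint0 : Integrable fun y => f y * φ y := key_int f hfc C₀ n₀ hC₀
  have hintd : Integrable fun y => deriv f y * φ y := key_int _ hf'c C₁ n₁ hC₁
  have hint1 : Integrable fun y => f (s * y) * φ y := by
    apply key_int _ (hfc.comp (continuous_const.mul continuous_id)) C₀ n₀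
    intro y
    calc |f (s * y)| ≤ C₀ * (1 + |s * y| ^ n₀) := hC₀ _
      _ ≤ C₀ * (1 + |y| ^ n₀) :=
          mul_le_mul_of_nonneg_left
            (by linarith [pow_le_pow_left₀ (abs_nonneg _) (habs_s y) n₀]) hC₀0
  have hint2 : Integrable fun y => deriv f (s * y) * φ y := by
    apply key_int _ (hf'c.comp (continuous_const.mul continuous_id)) C₁ n₁
    intro y
    calc |deriv f (s * y)| ≤ C₁ * (1 + |s * y| ^ n₁) := hC₁ _
      _ ≤ C₁ * (1 + |y| ^ n₁) :=
          mul_le_mul_of_nonneg_left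
            (by linarith [pow_le_pow_left₀ (abs_nonneg _) (habs_s y) n₁]) hC₁0
  have hint3 : Integrable fun y => f (a * x + s * y) * φ y := by
    apply key_int _ (hfc.comp ((continuous_const.mul continuous_const).add
      (continuous_const.mul continuous_id))) (C₀ * (1 + 2 ^ n₀ + 2 ^ n₀ * |x| ^ n₀)) n₀
    intro y
    have hxy : |a * x + s * y| ≤ |x| + |y| :=
      (abs_add_le _ _).trans (add_le_add (habs_a x) (habs_s y))
    have h1 : |a * x + s * y| ^ n₀ ≤ (|x| + |y|) ^ n₀ :=
      pow_le_pow_left₀ (abs_nonneg _) hxy n₀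
    have h2 := OU_pow_add_le |x| |y| (abs_nonneg x) (abs_nonneg y) n₀
    have hX : (0:ℝ) ≤ |x| ^ n₀ := pow_nonneg (abs_nonneg x) n₀
    have hY : (0:ℝ) ≤ |y| ^ n₀ := pow_nonneg (abs_nonneg y) n₀
    have h2n : (0:ℝ) ≤ 2 ^ n₀ := by positivity
    calc |f (a * x + s * y)| ≤ C₀ * (1 + |a * x + s * y| ^ n₀) := hC₀ _
      _ ≤ C₀ * (1 + 2 ^ n₀ * (|x| ^ n₀ + |y| ^ n₀)) :=
          mul_le_mul_of_nonneg_left (by linarith) hC₀0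
      _ ≤ C₀ * (1 + 2 ^ n₀ + 2 ^ n₀ * |x| ^ n₀) * (1 + |y| ^ n₀) := by
          have key : (1 + 2 ^ n₀ * (|x| ^ n₀ + |y| ^ n₀))
              ≤ (1 + 2 ^ n₀ + 2 ^ n₀ * |x| ^ n₀) * (1 + |y| ^ n₀) := by
            have e1 : (0:ℝ) ≤ 2 ^ n₀ * |x| ^ n₀ * |y| ^ n₀ :=
              mul_nonneg (mul_nonneg h2n hX) hY
            linarith [e1, mul_nonneg h2n hY, hY, h2n]
          calc C₀ * (1 + 2 ^ n₀ * (|x| ^ n₀ + |y| ^ n₀))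
              ≤ C₀ * ((1 + 2 ^ n₀ + 2 ^ n₀ * |x| ^ n₀) * (1 + |y| ^ n₀)) :=
                mul_le_mul_of_nonneg_left key hC₀0
            _ = C₀ * (1 + 2 ^ n₀ + 2 ^ n₀ * |x| ^ n₀) * (1 + |y| ^ n₀) := by ring
  -- pointwise Lipschitz estimates
  have hfdiff : ∀ y : ℝ, |f (s * y) - f y| ≤ C₁ * (1 + |y| ^ n₁) * (a ^ 2 * |y|) := by
    intro y
    have hM : ∀ z ∈ Set.uIcc y (s * y), |deriv f z| ≤ C₁ * (1 + |y| ^ n₁) := by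
      intro z hz
      have hzb : |z| ≤ |y| := (OU_mem_abs hz).trans (max_le le_rfl (habs_s y))
      calc |deriv f z| ≤ C₁ * (1 + |z| ^ n₁) := hC₁ z
        _ ≤ C₁ * (1 + |y| ^ n₁) :=
            mul_le_mul_of_nonneg_left
              (by linarith [pow_le_pow_left₀ (abs_nonneg z) hzb n₁]) hC₁0
    have h := OU_lip f (fun z => hdf z) y (s * y) (C₁ * (1 + |y| ^ n₁)) hM
    have hsy : |s * y - y| ≤ a ^ 2 * |y| := by
      rw [show s * y - y = -((1 - s) * y) by ring, abs_neg, abs_mul,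
        abs_of_nonneg (by linarith : (0:ℝ) ≤ 1 - s)]
      exact mul_le_mul_of_nonneg_right h1s (abs_nonneg y)
    have hc1 : 0 ≤ C₁ * (1 + |y| ^ n₁) := mul_nonneg hC₁0 (by positivity)
    calc |f (s * y) - f y| ≤ C₁ * (1 + |y| ^ n₁) * |s * y - y| := h
      _ ≤ C₁ * (1 + |y| ^ n₁) * (a ^ 2 * |y|) := mul_le_mul_of_nonneg_left hsy hc1
  have hf'diff : ∀ y : ℝ,
      |deriv f (s * y) - deriv f y| ≤ C₂ * (1 + |y| ^ n₂) * (a ^ 2 * |y|) := by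
    intro y
    have hM : ∀ z ∈ Set.uIcc y (s * y), |deriv (deriv f) z| ≤ C₂ * (1 + |y| ^ n₂) := by
      intro z hz
      have hzb : |z| ≤ |y| := (OU_mem_abs hz).trans (max_le le_rfl (habs_s y))
      calc |deriv (deriv f) z| ≤ C₂ * (1 + |z| ^ n₂) := hC₂ z
        _ ≤ C₂ * (1 + |y| ^ n₂) :=
            mul_le_mul_of_nonneg_left
              (by linarith [pow_le_pow_left₀ (abs_nonneg z) hzb n₂]) hC₂0
    have h := OU_lip (deriv f) (fun z => hdf' z) y (s * y) (C₂ * (1 + |y| ^ n₂)) hM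
    have hsy : |s * y - y| ≤ a ^ 2 * |y| := by
      rw [show s * y - y = -((1 - s) * y) by ring, abs_neg, abs_mul,
        abs_of_nonneg (by linarith : (0:ℝ) ≤ 1 - s)]
      exact mul_le_mul_of_nonneg_right h1s (abs_nonneg y)
    have hc1 : 0 ≤ C₂ * (1 + |y| ^ n₂) := mul_nonneg hC₂0 (by positivity)
    calc |deriv f (s * y) - deriv f y| ≤ C₂ * (1 + |y| ^ n₂) * |s * y - y| := h
      _ ≤ C₂ * (1 + |y| ^ n₂) * (a ^ 2 * |y|) := mul_le_mul_of_nonneg_left hsy hc1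
  -- estimate of the zeroth-order term
  have hIL1 : Integrable fun y => (f (s * y) - f y) * φ y :=
    (hint1.sub hint0).congr (Filter.Eventually.of_forall fun y => by simp only [Pi.sub_apply]; ring)
  have hA : |∫ y, f (s * y) * φ y| ≤ a ^ 2 * K₁ := by
    have hsub : (∫ y, (f (s * y) - f y) * φ y) = ∫ y, f (s * y) * φ y := by
      have h1 : (∫ y, (f (s * y) - f y) * φ y)
          = (∫ y, f (s * y) * φ y) - ∫ y, f y * φ y := by
        rw [← integral_sub hint1 hint0]
        exact integral_congr_ae (Filter.Eventually.of_forall fun y => by ring)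
      rw [h1, hcentered, sub_zero]
    rw [← hsub]
    have hRHSint : Integrable fun y => a ^ 2 * C₁ * (|y| ^ 1 * φ y + |y| ^ (n₁ + 1) * φ y) :=
      ((hIk 1).add (hIk (n₁ + 1))).const_mul _
    calc |∫ y, (f (s * y) - f y) * φ y|
        ≤ ∫ y, |(f (s * y) - f y) * φ y| := by
          simpa only [Real.norm_eq_abs] using
            norm_integral_le_integral_norm (fun y => (f (s * y) - f y) * φ y)
      _ ≤ ∫ y, a ^ 2 * C₁ * (|y| ^ 1 * φ y + |y| ^ (n₁ + 1) * φ y) := by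
          refine integral_mono hIL1.abs hRHSint fun y => ?_
          show |(f (s * y) - f y) * φ y|
              ≤ a ^ 2 * C₁ * (|y| ^ 1 * φ y + |y| ^ (n₁ + 1) * φ y)
          rw [abs_mul, abs_of_pos (hφpos y)]
          calc |f (s * y) - f y| * φ y
              ≤ (C₁ * (1 + |y| ^ n₁) * (a ^ 2 * |y|)) * φ y :=
                mul_le_mul_of_nonneg_right (hfdiff y) (hφpos y).le
            _ = a ^ 2 * C₁ * (|y| ^ 1 * φ y + |y| ^ (n₁ + 1) * φ y) := by
                rw [pow_succ]; ring
      _ = a ^ 2 * K₁ := by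
          rw [integral_const_mul, integral_add (hIk 1) (hIk (n₁ + 1)), hK₁def,
            hM1def, hMn1def]
          ring
  -- estimate of the first-order term
  have hIL2 : Integrable fun y => (deriv f (s * y) - deriv f y) * φ y :=
    (hint2.sub hintd).congr (Filter.Eventually.of_forall fun y => by simp only [Pi.sub_apply]; ring)
  have hB : |(∫ y, deriv f (s * y) * φ y) - ∫ y, deriv f y * φ y| ≤ a ^ 2 * K₂ := by
    rw [← integral_sub hint2 hintd]
    have heq : (∫ y, (deriv f (s * y) * φ y - deriv f y * φ y))
        = ∫ y, (deriv f (s * y) - deriv f y) * φ y :=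
      integral_congr_ae (Filter.Eventually.of_forall fun y => by ring)
    rw [heq]
    have hRHSint : Integrable fun y => a ^ 2 * C₂ * (|y| ^ 1 * φ y + |y| ^ (n₂ + 1) * φ y) :=
      ((hIk 1).add (hIk (n₂ + 1))).const_mul _
    calc |∫ y, (deriv f (s * y) - deriv f y) * φ y|
        ≤ ∫ y, |(deriv f (s * y) - deriv f y) * φ y| := by
          simpa only [Real.norm_eq_abs] using
            norm_integral_le_integral_norm (fun y => (deriv f (s * y) - deriv f y) * φ y)
      _ ≤ ∫ y, a ^ 2 * C₂ * (|y| ^ 1 * φ y + |y| ^ (n₂ + 1) * φ y) := by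
          refine integral_mono hIL2.abs hRHSint fun y => ?_
          show |(deriv f (s * y) - deriv f y) * φ y|
              ≤ a ^ 2 * C₂ * (|y| ^ 1 * φ y + |y| ^ (n₂ + 1) * φ y)
          rw [abs_mul, abs_of_pos (hφpos y)]
          calc |deriv f (s * y) - deriv f y| * φ y
              ≤ (C₂ * (1 + |y| ^ n₂) * (a ^ 2 * |y|)) * φ y :=
                mul_le_mul_of_nonneg_right (hf'diff y) (hφpos y).le
            _ = a ^ 2 * C₂ * (|y| ^ 1 * φ y + |y| ^ (n₂ + 1) * φ y) := by
                rw [pow_succ]; ring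
      _ = a ^ 2 * K₂ := by
          rw [integral_const_mul, integral_add (hIk 1) (hIk (n₂ + 1)), hK₂def,
            hM1def, hMn2def]
          ring
  -- Taylor remainder estimate
  have hR : ∀ y : ℝ, |f (a * x + s * y) - f (s * y) - a * x * deriv f (s * y)|
      ≤ C₂ * (1 + (|x| + |y|) ^ n₂) * (a * x) ^ 2 := by
    intro y
    have hM : ∀ z, |z| ≤ |s * y| + |a * x| →
        |deriv (deriv f) z| ≤ C₂ * (1 + (|x| + |y|) ^ n₂) := by
      intro z hzb
      have hz2 : |z| ≤ |x| + |y| := by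
        have h1 := habs_s y; have h2 := habs_a x; linarith
      calc |deriv (deriv f) z| ≤ C₂ * (1 + |z| ^ n₂) := hC₂ z
        _ ≤ C₂ * (1 + (|x| + |y|) ^ n₂) :=
            mul_le_mul_of_nonneg_left
              (by linarith [pow_le_pow_left₀ (abs_nonneg z) hz2 n₂]) hC₂0
    have h := OU_taylor f hdf hdf' (s * y) (a * x) (C₂ * (1 + (|x| + |y|) ^ n₂)) hM
    rw [show s * y + a * x = a * x + s * y by ring] at h
    exact h
  have hintR : Integrable fun y =>
      (f (a * x + s * y) - f (s * y) - a * x * deriv f (s * y)) * φ y :=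
    ((hint3.sub hint1).sub (hint2.const_mul (a * x))).congr
      (Filter.Eventually.of_forall fun y => by simp only [Pi.sub_apply]; ring)
  have split : (∫ y, f (a * x + s * y) * φ y)
      = (∫ y, f (s * y) * φ y) + a * x * (∫ y, deriv f (s * y) * φ y)
        + ∫ y, (f (a * x + s * y) - f (s * y) - a * x * deriv f (s * y)) * φ y := by
    have hint12 : Integrable fun y => f (s * y) * φ y + a * x * (deriv f (s * y) * φ y) :=
      hint1.add (hint2.const_mul (a * x))
    rw [← integral_const_mul (a * x), ← integral_add hint1 (hint2.const_mul (a * x)),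
      ← integral_add hint12 hintR]
    exact integral_congr_ae (Filter.Eventually.of_forall fun y => by ring)
  have hRHS3int : Integrable fun y => a ^ 2 * x ^ 2 * C₂ *
      ((1 + 2 ^ n₂ * |x| ^ n₂) * φ y + 2 ^ n₂ * (|y| ^ n₂ * φ y)) :=
    ((hIφ.const_mul _).add ((hIk n₂).const_mul _)).const_mul _
  have hRint : |∫ y, (f (a * x + s * y) - f (s * y) - a * x * deriv f (s * y)) * φ y|
      ≤ a ^ 2 * (x ^ 2 * (C₂ * ((1 + 2 ^ n₂ * |x| ^ n₂) * M0 + 2 ^ n₂ * MN))) := by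
    calc |∫ y, (f (a * x + s * y) - f (s * y) - a * x * deriv f (s * y)) * φ y|
        ≤ ∫ y, |(f (a * x + s * y) - f (s * y) - a * x * deriv f (s * y)) * φ y| := by
          simpa only [Real.norm_eq_abs] using norm_integral_le_integral_norm
            (fun y => (f (a * x + s * y) - f (s * y) - a * x * deriv f (s * y)) * φ y)
      _ ≤ ∫ y, a ^ 2 * x ^ 2 * C₂ *
            ((1 + 2 ^ n₂ * |x| ^ n₂) * φ y + 2 ^ n₂ * (|y| ^ n₂ * φ y)) := by
          refine integral_mono hintR.abs hRHS3int fun y => ?_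
          show |(f (a * x + s * y) - f (s * y) - a * x * deriv f (s * y)) * φ y|
              ≤ a ^ 2 * x ^ 2 * C₂ *
                ((1 + 2 ^ n₂ * |x| ^ n₂) * φ y + 2 ^ n₂ * (|y| ^ n₂ * φ y))
          rw [abs_mul, abs_of_pos (hφpos y)]
          have hpw := OU_pow_add_le |x| |y| (abs_nonneg x) (abs_nonneg y) n₂
          calc |f (a * x + s * y) - f (s * y) - a * x * deriv f (s * y)| * φ y
              ≤ (C₂ * (1 + (|x| + |y|) ^ n₂) * (a * x) ^ 2) * φ y :=
                mul_le_mul_of_nonneg_right (hR y) (hφpos y).le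
            _ ≤ (C₂ * (1 + 2 ^ n₂ * (|x| ^ n₂ + |y| ^ n₂)) * (a * x) ^ 2) * φ y :=
                mul_le_mul_of_nonneg_right (mul_le_mul_of_nonneg_right
                  (mul_le_mul_of_nonneg_left (by linarith) hC₂0) (sq_nonneg _))
                  (hφpos y).le
            _ = a ^ 2 * x ^ 2 * C₂ *
                ((1 + 2 ^ n₂ * |x| ^ n₂) * φ y + 2 ^ n₂ * (|y| ^ n₂ * φ y)) := by ring
      _ = a ^ 2 * (x ^ 2 * (C₂ * ((1 + 2 ^ n₂ * |x| ^ n₂) * M0 + 2 ^ n₂ * MN))) := by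
          rw [integral_const_mul, integral_add (hIφ.const_mul _) ((hIk n₂).const_mul _),
            integral_const_mul, integral_const_mul, ← hM0def, ← hMNdef]
          ring
  -- assembly
  have hE0 : (0:ℝ) < Real.exp (μ * t) := Real.exp_pos _
  have ea : Real.exp (μ * t) * a = 1 := by
    rw [ha, ← Real.exp_add, show μ * t + -μ * t = 0 by ring, Real.exp_zero]
  have hTx : T t f x = (∫ y, f (s * y) * φ y) + a * x * (∫ y, deriv f (s * y) * φ y)
      + ∫ y, (f (a * x + s * y) - f (s * y) - a * x * deriv f (s * y)) * φ y := by
    rw [hT t f x, ← ha, ← hs]; exact split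
  set A := ∫ y, f (s * y) * φ y with hAdef
  set B := ∫ y, deriv f (s * y) * φ y with hBdef
  set D := ∫ y, deriv f y * φ y with hDdef
  set Rr := ∫ y, (f (a * x + s * y) - f (s * y) - a * x * deriv f (s * y)) * φ y with hRdef
  have hident : Real.exp (μ * t) * T t f x - x * D
      = Real.exp (μ * t) * A + x * (B - D) + Real.exp (μ * t) * Rr := by
    rw [hTx]; linear_combination (x * B) * ea
  rw [hident]
  set Qx : ℝ := C₂ * ((1 + 2 ^ n₂ * |x| ^ n₂) * M0 + 2 ^ n₂ * MN) with hQxdef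
  have Ea2 : Real.exp (μ * t) * a ^ 2 = a := by linear_combination a * ea
  have h1 : Real.exp (μ * t) * |A| ≤ a * K₁ := by
    calc Real.exp (μ * t) * |A| ≤ Real.exp (μ * t) * (a ^ 2 * K₁) :=
          mul_le_mul_of_nonneg_left hA hE0.le
      _ = a * K₁ := by rw [← mul_assoc, Ea2]
  have h2 : |x| * |B - D| ≤ a * (|x| * K₂) := by
    have haa : a ^ 2 ≤ a := by linarith [mul_le_mul_of_nonneg_left ha1.le ha0.le]
    calc |x| * |B - D| ≤ |x| * (a ^ 2 * K₂) := mul_le_mul_of_nonneg_left hB (abs_nonneg x)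
      _ ≤ a * (|x| * K₂) := by
          linarith [mul_le_mul_of_nonneg_left haa (mul_nonneg (abs_nonneg x) hK₂0)]
  have h3 : Real.exp (μ * t) * |Rr| ≤ a * (x ^ 2 * Qx) := by
    calc Real.exp (μ * t) * |Rr| ≤ Real.exp (μ * t) * (a ^ 2 * (x ^ 2 * Qx)) :=
          mul_le_mul_of_nonneg_left (by rw [hQxdef]; exact hRint) hE0.le
      _ = a * (x ^ 2 * Qx) := by rw [← mul_assoc, Ea2]
  have habs3 : |Real.exp (μ * t) * A + x * (B - D) + Real.exp (μ * t) * Rr|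
      ≤ Real.exp (μ * t) * |A| + |x| * |B - D| + Real.exp (μ * t) * |Rr| := by
    calc |Real.exp (μ * t) * A + x * (B - D) + Real.exp (μ * t) * Rr|
        ≤ |Real.exp (μ * t) * A + x * (B - D)| + |Real.exp (μ * t) * Rr| := abs_add_le _ _
      _ ≤ |Real.exp (μ * t) * A| + |x * (B - D)| + |Real.exp (μ * t) * Rr| := by
          linarith [abs_add_le (Real.exp (μ * t) * A) (x * (B - D))]
      _ = Real.exp (μ * t) * |A| + |x| * |B - D| + Real.exp (μ * t) * |Rr| := by
          rw [abs_mul, abs_mul, abs_mul, abs_of_pos hE0]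
  have hcore : K₁ + |x| * K₂ + x ^ 2 * Qx
      ≤ (1 + K₁ + K₂ + Q0) * (1 + |x| ^ (n₂ + 2)) := by
    have hu1 : |x| ≤ 1 + |x| ^ (n₂ + 2) := by
      have := OU_abs_pow_le x 1 (n₂ + 2) (by omega)
      simpa using this
    have hu2 : |x| ^ 2 ≤ 1 + |x| ^ (n₂ + 2) := OU_abs_pow_le x 2 (n₂ + 2) (by omega)
    have hsq : |x| ^ 2 = x ^ 2 := sq_abs x
    have hum : (0:ℝ) ≤ |x| ^ (n₂ + 2) := pow_nonneg (abs_nonneg x) (n₂ + 2)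
    have h2n : (0:ℝ) ≤ 2 ^ n₂ := by positivity
    have t1 : |x| * K₂ ≤ K₂ * (1 + |x| ^ (n₂ + 2)) := by
      calc |x| * K₂ = K₂ * |x| := by ring
        _ ≤ K₂ * (1 + |x| ^ (n₂ + 2)) := mul_le_mul_of_nonneg_left hu1 hK₂0
    have t2 : x ^ 2 * (C₂ * M0) ≤ C₂ * M0 * (1 + |x| ^ (n₂ + 2)) := by
      calc x ^ 2 * (C₂ * M0) = C₂ * M0 * |x| ^ 2 := by rw [hsq]; ring
        _ ≤ C₂ * M0 * (1 + |x| ^ (n₂ + 2)) :=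
            mul_le_mul_of_nonneg_left hu2 (mul_nonneg hC₂0 hM00)
    have t3 : x ^ 2 * (C₂ * (2 ^ n₂ * MN)) ≤ C₂ * (2 ^ n₂ * MN) * (1 + |x| ^ (n₂ + 2)) := by
      calc x ^ 2 * (C₂ * (2 ^ n₂ * MN)) = C₂ * (2 ^ n₂ * MN) * |x| ^ 2 := by rw [hsq]; ring
        _ ≤ C₂ * (2 ^ n₂ * MN) * (1 + |x| ^ (n₂ + 2)) :=
            mul_le_mul_of_nonneg_left hu2 (mul_nonneg hC₂0 (mul_nonneg h2n hMN0))
    have c4 : (0:ℝ) ≤ C₂ * (2 ^ n₂ * M0) := mul_nonneg hC₂0 (mul_nonneg h2n hM00)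
    have t4 : x ^ 2 * (C₂ * (2 ^ n₂ * M0) * |x| ^ n₂)
        ≤ C₂ * (2 ^ n₂ * M0) * (1 + |x| ^ (n₂ + 2)) := by
      have heq : x ^ 2 * (C₂ * (2 ^ n₂ * M0) * |x| ^ n₂)
          = C₂ * (2 ^ n₂ * M0) * |x| ^ (n₂ + 2) := by
        rw [pow_add, ← hsq]; ring
      rw [heq]
      linarith [c4]
    rw [hQxdef, hQ0def]
    linarith [t1, t2, t3, t4, mul_nonneg hK₁0 hum, hum]
  calc |Real.exp (μ * t) * A + x * (B - D) + Real.exp (μ * t) * Rr|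
      ≤ a * K₁ + a * (|x| * K₂) + a * (x ^ 2 * Qx) := by linarith [habs3, h1, h2, h3]
    _ = a * (K₁ + |x| * K₂ + x ^ 2 * Qx) := by ring
    _ ≤ a * ((1 + K₁ + K₂ + Q0) * (1 + |x| ^ (n₂ + 2))) :=
        mul_le_mul_of_nonneg_left hcore ha0.le
    _ = (1 + K₁ + K₂ + Q0) * (1 + |x| ^ (n₂ + 2)) * a := by ring
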